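/- Let G and H be finite simple graphs and let C₁ and C₂ be two clique covers of G with |C₁| = |C₂| = k such that there is a bijection between C₁ and C₂ matching cliques of equal cardinality. Then D(G^{C₁} ⋆ H, x) = D(G^{C₂} ⋆ H, x). -/

import Mathlib

open Polynomial

variable {V W : Type*}

/-- `S` is a dominating set of `G`. -/
def Dominates (G : SimpleGraph V) (S : Finset V) : Prop :=
  ∀ v, v ∉ S → ∃ u ∈ S, G.Adj u v

open Classical in
/-- The domination polynomial of a finite simple graph. -/
noncomputable def domPoly [Fintype V] (G : SimpleGraph V) : Polynomial ℤ :=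
  ∑ S : Finset V, if Dominates G S then (X : Polynomial ℤ) ^ S.card else 0

/-- The clique cover product `G^C ⋆ H^U`. -/
def cliqueCoverProduct (G : SimpleGraph V) (H : SimpleGraph W) {k : ℕ}
    (C : Fin k → Finset V) (U : Set W) : SimpleGraph (V ⊕ Fin k × W) where
  Adj x y :=
    match x, y with
    | Sum.inl a, Sum.inl b => G.Adj a b
    | Sum.inl a, Sum.inr (i, w) => a ∈ C i ∧ w ∈ U
    | Sum.inr (i, w), Sum.inl a => a ∈ C i ∧ w ∈ U
    | Sum.inr (i, w), Sum.inr (j, w') => i = j ∧ H.Adj w w'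
  symm := by
    constructor
    rintro (a | ⟨i, w⟩) (b | ⟨j, w'⟩) h
    · exact G.adj_symm h
    · exact h
    · exact h
    · exact ⟨h.1.symm, H.adj_symm h.2⟩
  loopless := by
    constructor
    rintro (a | ⟨i, w⟩) h
    · exact G.irrefl h
    · exact H.irrefl h.2

/-- `C` is a clique cover of `G`: a partition of the vertices into cliques. -/
def IsCliqueCover (G : SimpleGraph V) {k : ℕ} (C : Fin k → Finset V) : Prop :=
  (∀ i, (C i).Nonempty) ∧ (∀ v, ∃! i, v ∈ C i) ∧ ∀ i, G.IsClique (C i : Set V)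

/-- Characterization of dominating sets of the clique cover product when `W` is nonempty. -/
lemma dominates_ccp_iff [Nonempty W] (G : SimpleGraph V) (H : SimpleGraph W)
    {k : ℕ} {C : Fin k → Finset V} (hC : IsCliqueCover G C)
    (S : Finset (V ⊕ Fin k × W)) :
    Dominates (cliqueCoverProduct G H C Set.univ) S ↔
      ∀ i, (∃ v ∈ C i, Sum.inl v ∈ S) ∨
        (∀ w, Sum.inr (i, w) ∉ S → ∃ u, Sum.inr (i, u) ∈ S ∧ H.Adj u w) := by
  obtain ⟨hne, hpart, hclique⟩ := hC
  constructor
  · intro hdom i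
    by_cases hA : ∃ v ∈ C i, Sum.inl v ∈ S
    · exact Or.inl hA
    · refine Or.inr fun w hw => ?_
      obtain ⟨u, huS, hadj⟩ := hdom _ hw
      match u with
      | Sum.inl a =>
        exact absurd ⟨a, hadj.1, huS⟩ hA
      | Sum.inr (j, w') =>
        obtain ⟨rfl, hadj'⟩ := hadj
        exact ⟨w', huS, hadj'⟩
  · intro h x hx
    match x with
    | Sum.inl v =>
      obtain ⟨i, hvi, -⟩ := hpart v
      rcases h i with ⟨u, hu, huS⟩ | h2
      · rcases eq_or_ne u v with rfl | hne'
        · exact absurd huS hx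
        · exact ⟨Sum.inl u, huS, hclique i hu hvi hne'⟩
      · obtain ⟨w₀⟩ := ‹Nonempty W›
        by_cases hw : Sum.inr (i, w₀) ∈ S
        · exact ⟨Sum.inr (i, w₀), hw, ⟨hvi, Set.mem_univ _⟩⟩
        · obtain ⟨u, huS, -⟩ := h2 w₀ hw
          exact ⟨Sum.inr (i, u), huS, ⟨hvi, Set.mem_univ _⟩⟩
    | Sum.inr (i, w) =>
      rcases h i with ⟨u, hu, huS⟩ | h2
      · exact ⟨Sum.inl u, huS, ⟨hu, Set.mem_univ _⟩⟩
      · obtain ⟨u, huS, hadj⟩ := h2 w hx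
        exact ⟨Sum.inr (i, u), huS, ⟨rfl, hadj⟩⟩

/-- Given two partitions of `V` into parts matched in cardinality by `σ`, there is a
permutation of `V` carrying each part of the first partition onto the matched part. -/
lemma exists_equiv_parts {V : Type*} {k : ℕ} {C₁ C₂ : Fin k → Finset V}
    (h₁ : ∀ v, ∃! i, v ∈ C₁ i) (h₂ : ∀ v, ∃! i, v ∈ C₂ i)
    (σ : Equiv.Perm (Fin k)) (hσ : ∀ i, (C₁ i).card = (C₂ (σ i)).card) :
    ∃ τ : V ≃ V, ∀ i v, v ∈ C₁ i ↔ τ v ∈ C₂ (σ i) := by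
  choose ι₁ hmem₁ huniq₁ using h₁
  choose ι₂ hmem₂ huniq₂ using h₂
  let e : ∀ i, {x // x ∈ C₁ i} ≃ {x // x ∈ C₂ (σ i)} := fun i => Finset.equivOfCardEq (hσ i)
  have hcast : ∀ (i j : Fin k) (h : i = j) (x : V) (hx : x ∈ C₁ i),
      ((e i ⟨x, hx⟩ : V)) = (e j ⟨x, h ▸ hx⟩ : V) := by rintro i j rfl x hx; rfl
  let f : V → V := fun v => (e (ι₁ v) ⟨v, hmem₁ v⟩ : V)
  have hf : ∀ v, f v ∈ C₂ (σ (ι₁ v)) := fun v => (e (ι₁ v) ⟨v, hmem₁ v⟩).2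
  have hfspec : ∀ i v, v ∈ C₁ i → f v ∈ C₂ (σ i) := by
    intro i v hv
    rw [huniq₁ v i hv]
    exact hf v
  have hinj : Function.Injective f := by
    intro v v' hvv
    have hi : ι₁ v' = ι₁ v := by
      have h1 := hf v
      have h2 := hf v'
      rw [hvv] at h1
      have e1 := huniq₂ (f v') (σ (ι₁ v)) h1
      have e2 := huniq₂ (f v') (σ (ι₁ v')) h2
      exact σ.injective (e2.trans e1.symm)
    have : f v' = (e (ι₁ v) ⟨v', hi ▸ hmem₁ v'⟩ : V) := hcast _ _ hi v' (hmem₁ v')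
    rw [this] at hvv
    have := (e (ι₁ v)).injective (Subtype.ext hvv)
    exact congrArg Subtype.val this
  have hsurj : Function.Surjective f := by
    intro w
    have hw : w ∈ C₂ (σ (σ.symm (ι₂ w))) := by
      rw [Equiv.apply_symm_apply]; exact hmem₂ w
    set i := σ.symm (ι₂ w) with hidef
    set v : V := ((e i).symm ⟨w, hw⟩ : V) with hvdef
    have hvC : v ∈ C₁ i := ((e i).symm ⟨w, hw⟩).2
    refine ⟨v, ?_⟩
    have hiv : ι₁ v = i := (huniq₁ v i hvC).symm
    have : f v = (e i ⟨v, hiv ▸ hmem₁ v⟩ : V) := hcast _ _ hiv v (hmem₁ v)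
    rw [this]
    have : (⟨v, hiv ▸ hmem₁ v⟩ : {x // x ∈ C₁ i}) = (e i).symm ⟨w, hw⟩ := Subtype.ext rfl
    rw [this]
    simp
  refine ⟨Equiv.ofBijective f ⟨hinj, hsurj⟩, fun i v => ?_⟩
  constructor
  · exact hfspec i v
  · intro hv
    have h1 := huniq₂ (f v) (σ i) hv
    have h2 := huniq₂ (f v) (σ (ι₁ v)) (hf v)
    have : i = ι₁ v := σ.injective (h1.trans h2.symm)
    rw [this]; exact hmem₁ v

/-- Two clique covers of `G` whose cliques match up in cardinality
yield clique cover products with the same domination polynomial. -/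
theorem domPoly_cliqueCoverProduct_eq {V W : Type*} [Fintype V] [Fintype W]
    (G : SimpleGraph V) (H : SimpleGraph W) {k : ℕ} (C₁ C₂ : Fin k → Finset V)
    (hC₁ : IsCliqueCover G C₁) (hC₂ : IsCliqueCover G C₂)
    (σ : Equiv.Perm (Fin k)) (hσ : ∀ i, (C₁ i).card = (C₂ (σ i)).card) :
    domPoly (cliqueCoverProduct G H C₁ Set.univ) =
      domPoly (cliqueCoverProduct G H C₂ Set.univ) := by
  cases isEmpty_or_nonempty W with
  | inl hW =>
    congr 1
    ext x y
    match x, y with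
    | Sum.inl a, Sum.inl b => rfl
    | Sum.inl a, Sum.inr (i, w) => exact hW.elim w
    | Sum.inr (i, w), Sum.inl a => exact hW.elim w
    | Sum.inr (i, w), Sum.inr (j, w') => exact hW.elim w
  | inr hW =>
    classical
    obtain ⟨τ, hτ⟩ := exists_equiv_parts hC₁.2.1 hC₂.2.1 σ hσ
    set π : (V ⊕ Fin k × W) ≃ (V ⊕ Fin k × W) :=
      Equiv.sumCongr τ (Equiv.prodCongr σ (Equiv.refl W)) with hπ
    unfold domPoly
    refine Fintype.sum_equiv π.finsetCongr _ _ fun S => ?_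
    have hcard : (π.finsetCongr S).card = S.card := Finset.card_map _
    have hiff : Dominates (cliqueCoverProduct G H C₁ Set.univ) S ↔
        Dominates (cliqueCoverProduct G H C₂ Set.univ) (π.finsetCongr S) := by
      rw [dominates_ccp_iff G H hC₁, dominates_ccp_iff G H hC₂]
      refine Equiv.forall_congr σ fun i => ?_
      refine or_congr ?_ ?_
      · constructor
        · rintro ⟨v, hv, hvS⟩
          refine ⟨τ v, (hτ i v).mp hv, ?_⟩
          simpa [π, Equiv.finsetCongr, Finset.mem_map_equiv] using hvS
        · rintro ⟨v, hv, hvS⟩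
          refine ⟨τ.symm v, (hτ i _).mpr (by simpa using hv), ?_⟩
          simpa [π, Equiv.finsetCongr, Finset.mem_map_equiv] using hvS
      · constructor
        · intro h2 w hw
          have hw' : Sum.inr (i, w) ∉ S := by
            simpa [π, Equiv.finsetCongr, Finset.mem_map_equiv] using hw
          obtain ⟨u, huS, hadj⟩ := h2 w hw'
          refine ⟨u, ?_, hadj⟩
          simpa [π, Equiv.finsetCongr, Finset.mem_map_equiv] using huS
        · intro h2 w hw
          have hw' : Sum.inr (σ i, w) ∉ π.finsetCongr S := by
            simpa [π, Equiv.finsetCongr, Finset.mem_map_equiv] using hw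
          obtain ⟨u, huS, hadj⟩ := h2 w hw'
          refine ⟨u, ?_, hadj⟩
          simpa [π, Equiv.finsetCongr, Finset.mem_map_equiv] using huS
    rw [hcard]
    exact if_congr hiff rfl rfl
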